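/- The screewidth of the icosahedron graph is at most 8. -/

import Mathlib

open Finset

/-- A finite loopless multigraph on a vertex type `V`, given by a symmetric
edge-multiplicity function with zero diagonal. -/
structure Multigraph (V : Type) [Fintype V] [DecidableEq V] where
  m : V → V → ℕ
  symm : ∀ u v, m u v = m v u
  loopless : ∀ v, m v v = 0

namespace Multigraph

variable {V : Type} [Fintype V] [DecidableEq V] (G : Multigraph V)

/-- The underlying simple graph: adjacent iff joined by at least one edge. -/
def toSimpleGraph : SimpleGraph V where
  Adj u v := 0 < G.m u v
  symm := by
    constructor
    intro u v h
    rw [G.symm v u]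
    exact h
  loopless := by
    constructor
    intro v h
    rw [G.loopless v] at h
    exact lt_irrefl 0 h

/-- A multigraph is connected if its underlying simple graph is. -/
def Connected : Prop := G.toSimpleGraph.Connected

/-- The valence of a vertex: the number of edges incident to it. -/
def val (v : V) : ℕ := ∑ w, G.m v w

end Multigraph

/-- The degree of a divisor: the sum of its values. -/
def Divisor.deg {V : Type} [Fintype V] (D : V → ℤ) : ℤ := ∑ v, D v

/-- A divisor is effective if all its values are nonnegative. -/
def Divisor.Effective {V : Type} (D : V → ℤ) : Prop := ∀ v, 0 ≤ D v

namespace Multigraph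

variable {V : Type} [Fintype V] [DecidableEq V] (G : Multigraph V)

/-- The result of firing the vertex `v`: `v` loses its valence many chips, and
every other vertex `w` gains `m v w` chips. -/
def fire (v : V) (D : V → ℤ) : V → ℤ :=
  fun w => D w + (G.m v w : ℤ) - if w = v then (G.val v : ℤ) else 0

/-- Two divisors are equivalent if one is obtained from the other by a finite
sequence of firing moves. -/
def Equivalent (D D' : V → ℤ) : Prop :=
  Relation.ReflTransGen (fun A B => ∃ v, B = G.fire v A) D D'

/-- A divisor `D` wins the Gonality Game if for every vertex `q`, the divisor
`D - 1_q` is equivalent to an effective divisor. -/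
def Winning (D : V → ℤ) : Prop :=
  ∀ q : V, ∃ D' : V → ℤ,
    G.Equivalent (fun w => D w - if w = q then 1 else 0) D' ∧ Divisor.Effective D'

/-- The gonality of `G`: the minimum degree of an effective divisor that wins
the Gonality Game. -/
noncomputable def gonality : ℕ :=
  sInf {n : ℕ | ∃ D : V → ℤ, Divisor.Effective D ∧ G.Winning D ∧ Divisor.deg D = (n : ℤ)}

end Multigraph

/-- The multigraph associated to a simple graph: one edge for each adjacency. -/
def Multigraph.ofSimpleGraph {V : Type} [Fintype V] [DecidableEq V]
    (G : SimpleGraph V) [DecidableRel G.Adj] : Multigraph V where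
  m u v := if G.Adj u v then 1 else 0
  symm := by
    intro u v
    by_cases h : G.Adj u v
    · simp [h, h.symm]
    · have h' : ¬ G.Adj v u := fun hvu => h hvu.symm
      simp [h, h']
  loopless := by intro v; simp

namespace Multigraph

variable {V : Type} [Fintype V] [DecidableEq V] (G : Multigraph V)

open scoped Classical in
/-- Given a tree-cut decomposition `(T, b)` of `G`, the number of edges of `G`
routed through the link `{x, y}` of `T`: an edge `uv` of `G` is routed through
the link iff `b u` and `b v` are separated by deleting that link from `T`.
Each edge of `G` is counted once (the double sum counts ordered pairs). -/
noncomputable def linkCount {N : Type} (T : SimpleGraph N) (b : V → N) (x y : N) : ℕ :=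
  (∑ u : V, ∑ v : V,
    if ¬ (T.deleteEdges {s(x, y)}).Reachable (b u) (b v) then G.m u v else 0) / 2

open scoped Classical in
/-- Given a tree-cut decomposition `(T, b)` of `G`, the number of vertices of
`G` assigned to the node `n`, plus the number of edges of `G` routed through
`n` with neither endpoint assigned to `n` (an edge `uv` is routed through `n`
iff `n` lies on the path in `T` from `b u` to `b v`). -/
noncomputable def nodeCount {N : Type} (T : SimpleGraph N) (b : V → N) (n : N) : ℕ :=
  (Finset.univ.filter fun v => b v = n).card +
  (∑ u : V, ∑ v : V,
    if b u ≠ n ∧ b v ≠ n ∧ ∃ p : T.Walk (b u) (b v), p.IsPath ∧ n ∈ p.support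
    then G.m u v else 0) / 2

/-- The width of a tree-cut decomposition: the maximum over all links of the
number of edges routed through the link, and over all nodes of the number of
vertices assigned to the node plus the number of edges tunneling through it. -/
noncomputable def decompositionWidth {N : Type} (T : SimpleGraph N) (b : V → N) : ℕ :=
  sSup ({k : ℕ | ∃ x y, T.Adj x y ∧ G.linkCount T b x y = k} ∪
        {k : ℕ | ∃ n, G.nodeCount T b n = k})

/-- The screewidth of `G`: the minimum width of a tree-cut decomposition of
`G`, i.e. of a (finite) tree `T` with the vertices of `G` assigned to its
nodes. -/
noncomputable def screewidth : ℕ :=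
  sInf {k : ℕ | ∃ (r : ℕ) (T : SimpleGraph (Fin r)) (b : V → Fin r),
    T.IsTree ∧ G.decompositionWidth T b = k}

end Multigraph

/-- Edge list of the icosahedron graph: apexes `0` and `11`, an upper pentagon
`1,…,5`, a lower pentagon `6,…,10`, with an antiprism between the pentagons. -/
def icosahedronEdges : List (ℕ × ℕ) :=
  [(0,1),(0,2),(0,3),(0,4),(0,5),
   (1,2),(2,3),(3,4),(4,5),(5,1),
   (1,6),(1,7),(2,7),(2,8),(3,8),(3,9),(4,9),(4,10),(5,10),(5,6),
   (6,7),(7,8),(8,9),(9,10),(10,6),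
   (11,6),(11,7),(11,8),(11,9),(11,10)]

/-- The icosahedron graph: the 1-skeleton of the regular icosahedron, the
5-regular simple graph on 12 vertices with 30 edges. -/
def icosahedronGraph : SimpleGraph (Fin 12) where
  Adj u v := u ≠ v ∧
    ((u.val, v.val) ∈ icosahedronEdges ∨ (v.val, u.val) ∈ icosahedronEdges)
  symm := ⟨fun _ _ h => ⟨h.1.symm, h.2.symm⟩⟩
  loopless := ⟨fun _ h => h.1 rfl⟩

instance : DecidableRel icosahedronGraph.Adj :=
  fun _ _ => inferInstanceAs (Decidable (_ ∧ (_ ∨ _)))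


section ScwAux

/-- A path tree on three nodes: `0 - 1 - 2`. -/
def Ttree : SimpleGraph (Fin 3) where
  Adj x y := (x = 0 ∧ y = 1) ∨ (x = 1 ∧ y = 0) ∨ (x = 1 ∧ y = 2) ∨ (x = 2 ∧ y = 1)
  symm := by constructor; intro x y; fin_cases x <;> fin_cases y <;> decide
  loopless := by constructor; intro v; fin_cases v <;> decide

instance : DecidableRel Ttree.Adj := fun x y =>
  inferInstanceAs (Decidable ((x = 0 ∧ y = 1) ∨ (x = 1 ∧ y = 0) ∨ (x = 1 ∧ y = 2) ∨ (x = 2 ∧ y = 1)))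

/-- The bag assignment: vertices 0,1 to node 0; vertices 8,11 to node 2; rest to node 1. -/
def bmap : Fin 12 → Fin 3 := ![0, 0, 1, 1, 1, 1, 1, 1, 2, 1, 1, 2]

lemma reach_const {H : SimpleGraph (Fin 3)} (f : Fin 3 → Bool)
    (hf : ∀ a b, H.Adj a b → f a = f b) {a b : Fin 3} (h : H.Reachable a b) : f a = f b := by
  obtain ⟨p⟩ := h
  induction p with
  | nil => rfl
  | cons h q ih => exact (hf _ _ h).trans ih

lemma bridge01 : Ttree.IsBridge s((0 : Fin 3), 1) := by
  rw [SimpleGraph.isBridge_iff]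
  refine fun hr => ?_
  have := reach_const (H := Ttree \ SimpleGraph.fromEdgeSet {s((0 : Fin 3), 1)})
    (fun a => a = 0) ?_ hr
  · simp at this
  · intro a b hab
    rw [SimpleGraph.sdiff_adj, SimpleGraph.fromEdgeSet_adj] at hab
    obtain ⟨h1, h2⟩ := hab
    have h1' : (a = 0 ∧ b = 1) ∨ (a = 1 ∧ b = 0) ∨ (a = 1 ∧ b = 2) ∨ (a = 2 ∧ b = 1) := h1
    rcases h1' with ⟨ha, hb⟩ | ⟨ha, hb⟩ | ⟨ha, hb⟩ | ⟨ha, hb⟩ <;> subst ha <;> subst hb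
    · exact absurd ⟨Set.mem_singleton_iff.mpr rfl, by decide⟩ h2
    · exact absurd ⟨Set.mem_singleton_iff.mpr (by exact Sym2.eq_swap), by decide⟩ h2
    · rfl
    · rfl

lemma bridge12 : Ttree.IsBridge s((1 : Fin 3), 2) := by
  rw [SimpleGraph.isBridge_iff]
  refine fun hr => ?_
  have := reach_const (H := Ttree \ SimpleGraph.fromEdgeSet {s((1 : Fin 3), 2)})
    (fun a => a = 2) ?_ hr
  · simp at this
  · intro a b hab
    rw [SimpleGraph.sdiff_adj, SimpleGraph.fromEdgeSet_adj] at hab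
    obtain ⟨h1, h2⟩ := hab
    have h1' : (a = 0 ∧ b = 1) ∨ (a = 1 ∧ b = 0) ∨ (a = 1 ∧ b = 2) ∨ (a = 2 ∧ b = 1) := h1
    rcases h1' with ⟨ha, hb⟩ | ⟨ha, hb⟩ | ⟨ha, hb⟩ | ⟨ha, hb⟩ <;> subst ha <;> subst hb
    · rfl
    · rfl
    · exact absurd ⟨Set.mem_singleton_iff.mpr rfl, by decide⟩ h2
    · exact absurd ⟨Set.mem_singleton_iff.mpr (by exact Sym2.eq_swap), by decide⟩ h2

lemma e01 : Ttree.Adj 0 1 := by decide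
lemma e12 : Ttree.Adj 1 2 := by decide

lemma Ttree_isTree : Ttree.IsTree := by
  constructor
  · refine SimpleGraph.Connected.mk ?_
    intro u v
    fin_cases u <;> fin_cases v
    exacts [SimpleGraph.Reachable.refl _, e01.reachable, e01.reachable.trans e12.reachable,
      e01.reachable.symm, SimpleGraph.Reachable.refl _, e12.reachable,
      (e01.reachable.trans e12.reachable).symm, e12.reachable.symm,
      SimpleGraph.Reachable.refl _]
  · rw [SimpleGraph.isAcyclic_iff_forall_adj_isBridge]
    intro v w h
    have h' : (v = 0 ∧ w = 1) ∨ (v = 1 ∧ w = 0) ∨ (v = 1 ∧ w = 2) ∨ (v = 2 ∧ w = 1) := h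
    rcases h' with ⟨ha, hb⟩ | ⟨ha, hb⟩ | ⟨ha, hb⟩ | ⟨ha, hb⟩ <;> subst ha <;> subst hb
    · exact bridge01
    · rw [Sym2.eq_swap]; exact bridge01
    · exact bridge12
    · rw [Sym2.eq_swap]; exact bridge12

lemma ite_le_of_imp {P : Prop} {inst : Decidable P} {Q : Bool} (a : ℕ) (h : P → Q = true) :
    (@ite _ P inst a 0) ≤ (if Q = true then a else 0) := by
  split_ifs with h1 h2
  · exact le_rfl
  · exact absurd (h h1) h2
  · exact Nat.zero_le _
  · exact le_rfl

lemma linkCount_swap {V : Type} [Fintype V] [DecidableEq V] (G : Multigraph V)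
    {N : Type} (T : SimpleGraph N) (b : V → N) (x y : N) :
    G.linkCount T b x y = G.linkCount T b y x := by
  unfold Multigraph.linkCount
  rw [Sym2.eq_swap]

lemma link_bound (x y : Fin 3) (sb : Fin 12 → Fin 12 → Bool)
    (hs : ∀ u v, sb u v = false → (Ttree.deleteEdges {s(x, y)}).Reachable (bmap u) (bmap v))
    (hsum : (∑ u : Fin 12, ∑ v : Fin 12,
        if sb u v = true then (Multigraph.ofSimpleGraph icosahedronGraph).m u v else 0) = 16) :
    (Multigraph.ofSimpleGraph icosahedronGraph).linkCount Ttree bmap x y ≤ 8 := by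
  unfold Multigraph.linkCount
  refine le_trans (Nat.div_le_div_right (le_trans
    (Finset.sum_le_sum fun u _ => Finset.sum_le_sum fun v _ =>
      ite_le_of_imp _ fun hnr => ?_) (le_of_eq hsum))) (by norm_num)
  by_contra hq
  rw [Bool.not_eq_true] at hq
  exact hnr (hs u v hq)

lemma reach01 : ∀ a b : Fin 3, ((a = 0) ↔ (b = 0)) →
    (Ttree.deleteEdges {s((0 : Fin 3), 1)}).Reachable a b := by
  have ha : (Ttree.deleteEdges {s((0 : Fin 3), 1)}).Adj 1 2 := by
    rw [SimpleGraph.deleteEdges_adj]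
    exact ⟨by decide, by rw [Set.mem_singleton_iff]; decide⟩
  intro a b h
  fin_cases a <;> fin_cases b <;> simp at h <;>
    first
      | exact SimpleGraph.Reachable.refl _
      | exact ha.reachable
      | exact ha.reachable.symm

lemma reach12 : ∀ a b : Fin 3, ((a = 2) ↔ (b = 2)) →
    (Ttree.deleteEdges {s((1 : Fin 3), 2)}).Reachable a b := by
  have ha : (Ttree.deleteEdges {s((1 : Fin 3), 2)}).Adj 0 1 := by
    rw [SimpleGraph.deleteEdges_adj]
    exact ⟨by decide, by rw [Set.mem_singleton_iff]; decide⟩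
  intro a b h
  fin_cases a <;> fin_cases b <;> simp at h <;>
    first
      | exact SimpleGraph.Reachable.refl _
      | exact ha.reachable
      | exact ha.reachable.symm

lemma link01 : (Multigraph.ofSimpleGraph icosahedronGraph).linkCount Ttree bmap 0 1 ≤ 8 := by
  refine link_bound 0 1 (fun u v => !(decide ((bmap u = 0) ↔ (bmap v = 0)))) ?_ (by decide)
  intro u v h
  rw [Bool.not_eq_false'] at h
  exact reach01 _ _ (of_decide_eq_true h)

lemma link12 : (Multigraph.ofSimpleGraph icosahedronGraph).linkCount Ttree bmap 1 2 ≤ 8 := by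
  refine link_bound 1 2 (fun u v => !(decide ((bmap u = 2) ↔ (bmap v = 2)))) ?_ (by decide)
  intro u v h
  rw [Bool.not_eq_false'] at h
  exact reach12 _ _ (of_decide_eq_true h)

lemma avoid0 : ∀ a b : Fin 3, a ≠ 0 → b ≠ 0 →
    ∃ q : Ttree.Walk a b, q.IsPath ∧ (0 : Fin 3) ∉ q.support := by
  intro a b ha hb
  fin_cases a <;> fin_cases b <;> first
    | exact absurd rfl ha
    | exact absurd rfl hb
    | exact ⟨SimpleGraph.Walk.nil, SimpleGraph.Walk.IsPath.nil, by simp⟩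
    | exact ⟨SimpleGraph.Walk.cons e12 SimpleGraph.Walk.nil, by
        simp [SimpleGraph.Walk.isPath_def], by simp⟩
    | exact ⟨SimpleGraph.Walk.cons e12.symm SimpleGraph.Walk.nil, by
        simp [SimpleGraph.Walk.isPath_def], by simp⟩

lemma avoid2 : ∀ a b : Fin 3, a ≠ 2 → b ≠ 2 →
    ∃ q : Ttree.Walk a b, q.IsPath ∧ (2 : Fin 3) ∉ q.support := by
  intro a b ha hb
  fin_cases a <;> fin_cases b <;> first
    | exact absurd rfl ha
    | exact absurd rfl hb
    | exact ⟨SimpleGraph.Walk.nil, SimpleGraph.Walk.IsPath.nil, by simp⟩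
    | exact ⟨SimpleGraph.Walk.cons e01 SimpleGraph.Walk.nil, by
        simp [SimpleGraph.Walk.isPath_def], by simp⟩
    | exact ⟨SimpleGraph.Walk.cons e01.symm SimpleGraph.Walk.nil, by
        simp [SimpleGraph.Walk.isPath_def], by simp⟩

lemma mzero : ∀ u v : Fin 12, bmap u ≠ 1 → bmap v ≠ 1 → bmap u ≠ bmap v →
    (Multigraph.ofSimpleGraph icosahedronGraph).m u v = 0 := by decide

lemma node0 : (Multigraph.ofSimpleGraph icosahedronGraph).nodeCount Ttree bmap 0 ≤ 8 := by
  unfold Multigraph.nodeCount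
  rw [Finset.filter_congr_decidable]
  refine le_trans (Nat.add_le_add (le_of_eq (by decide))
    (le_trans (Nat.div_le_div_right (le_of_eq
      (Finset.sum_eq_zero fun u _ => Finset.sum_eq_zero fun v _ => ?_))) (by norm_num : (0:ℕ)/2 ≤ 6)))
    (by norm_num : 2 + 6 ≤ 8)
  rw [if_neg]
  rintro ⟨h1, h2, p, hp, hm⟩
  obtain ⟨q, hq, hq0⟩ := avoid0 (bmap u) (bmap v) h1 h2
  exact hq0 (((Ttree_isTree.existsUnique_path _ _).unique hp hq) ▸ hm)

lemma node2 : (Multigraph.ofSimpleGraph icosahedronGraph).nodeCount Ttree bmap 2 ≤ 8 := by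
  unfold Multigraph.nodeCount
  rw [Finset.filter_congr_decidable]
  refine le_trans (Nat.add_le_add (le_of_eq (by decide))
    (le_trans (Nat.div_le_div_right (le_of_eq
      (Finset.sum_eq_zero fun u _ => Finset.sum_eq_zero fun v _ => ?_))) (by norm_num : (0:ℕ)/2 ≤ 6)))
    (by norm_num : 2 + 6 ≤ 8)
  rw [if_neg]
  rintro ⟨h1, h2, p, hp, hm⟩
  obtain ⟨q, hq, hq0⟩ := avoid2 (bmap u) (bmap v) h1 h2
  exact hq0 (((Ttree_isTree.existsUnique_path _ _).unique hp hq) ▸ hm)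

lemma node1 : (Multigraph.ofSimpleGraph icosahedronGraph).nodeCount Ttree bmap 1 ≤ 8 := by
  unfold Multigraph.nodeCount
  rw [Finset.filter_congr_decidable]
  refine le_trans (Nat.add_le_add (le_of_eq (by decide))
    (le_trans (Nat.div_le_div_right (le_of_eq
      (Finset.sum_eq_zero fun u _ => Finset.sum_eq_zero fun v _ => ?_))) (by norm_num : (0:ℕ)/2 ≤ 0)))
    (by norm_num : 8 + 0 ≤ 8)
  by_cases hb : bmap u = bmap v
  · rw [if_neg]
    rintro ⟨h1, h2, p, hp, hm⟩
    have hq : (SimpleGraph.Walk.nil.copy rfl hb :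
        Ttree.Walk (bmap u) (bmap v)).IsPath := by
      rw [SimpleGraph.Walk.isPath_copy]
      exact SimpleGraph.Walk.IsPath.nil
    have hpq := (Ttree_isTree.existsUnique_path _ _).unique hp hq
    rw [hpq] at hm
    rw [SimpleGraph.Walk.support_copy, SimpleGraph.Walk.support_nil] at hm
    simp at hm
    exact h1 hm.symm
  · by_cases hc1 : bmap u ≠ (1 : Fin 3) ∧ bmap v ≠ (1 : Fin 3) ∧
        ∃ p : Ttree.Walk (bmap u) (bmap v), p.IsPath ∧ (1 : Fin 3) ∈ p.support
    · rw [if_pos hc1]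
      exact mzero u v hc1.1 hc1.2.1 hb
    · rw [if_neg hc1]

end ScwAux

/-- The screewidth of the icosahedron graph is at most `8`. -/
theorem screewidth_icosahedron_le :
    (Multigraph.ofSimpleGraph icosahedronGraph).screewidth ≤ 8 := by
  have hW : (Multigraph.ofSimpleGraph icosahedronGraph).decompositionWidth Ttree bmap ≤ 8 := by
    unfold Multigraph.decompositionWidth
    refine csSup_le ⟨(Multigraph.ofSimpleGraph icosahedronGraph).nodeCount Ttree bmap 0,
      Set.mem_union_right _ ⟨0, rfl⟩⟩ fun k hk => ?_
    rcases hk with ⟨x, y, hadj, rfl⟩ | ⟨n, rfl⟩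
    · have h' : (x = 0 ∧ y = 1) ∨ (x = 1 ∧ y = 0) ∨ (x = 1 ∧ y = 2) ∨ (x = 2 ∧ y = 1) := hadj
      rcases h' with ⟨ha, hb⟩ | ⟨ha, hb⟩ | ⟨ha, hb⟩ | ⟨ha, hb⟩ <;> subst ha <;> subst hb
      · exact link01
      · rw [linkCount_swap]; exact link01
      · exact link12
      · rw [linkCount_swap]; exact link12
    · fin_cases n
      · exact node0
      · exact node1
      · exact node2
  exact le_trans (Nat.sInf_le ⟨3, Ttree, bmap, Ttree_isTree, rfl⟩) hW
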